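/- Complementary slackness: suppose strong duality holds, i.e., there is w* in the probability simplex with d₂(w*) = η_∞², where η_∞ = max_j |fⱼ − ξ*(xⱼ)| for a minimax rational approximant ξ* = p*/q* with q*(xⱼ) ≠ 0 for all j, and suppose a suitably scaled (p*, q*) attains the infimum defining d₂(w*). Then for every j, wⱼ* · (η_∞ − |fⱼ − ξ*(xⱼ)|) = 0. -/

import Mathlib

open Polynomial

/-- The dual objective function `d₂(w)`. -/
noncomputable def d2 {m : ℕ} (n₁ n₂ : ℕ) (x f : Fin m → ℂ) (w : Fin m → ℝ) : ℝ :=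
  sInf {s : ℝ | ∃ p q : Polynomial ℂ, p.natDegree ≤ n₁ ∧ q.natDegree ≤ n₂ ∧
    (∑ j, w j * ‖q.eval (x j)‖ ^ 2) = 1 ∧
    s = ∑ j, w j * ‖f j * q.eval (x j) - p.eval (x j)‖ ^ 2}

/-- Complementary slackness: under strong duality `d₂(w*) = η∞²`, with a suitably
scaled `(p*, q*)` attaining the infimum, every `j` satisfies
`wⱼ* (η∞ − |fⱼ − ξ*(xⱼ)|) = 0`. -/
theorem stmt3 {m : ℕ} (n₁ n₂ : ℕ) (hm : n₁ + n₂ + 2 ≤ m) (x : Fin m → ℂ)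
    (hx : Function.Injective x) (f : Fin m → ℂ)
    (p q : Polynomial ℂ) (hp : p.natDegree ≤ n₁) (hq : q.natDegree ≤ n₂)
    (hq0 : ∀ j, q.eval (x j) ≠ 0) (η : ℝ)
    (hub : ∀ j, ‖f j - p.eval (x j) / q.eval (x j)‖ ≤ η)
    (hatt : ∃ j, ‖f j - p.eval (x j) / q.eval (x j)‖ = η)
    (hmin : ∀ p' q' : Polynomial ℂ, p'.natDegree ≤ n₁ → q'.natDegree ≤ n₂ →
      (∀ j, q'.eval (x j) ≠ 0) →
      ∃ j, η ≤ ‖f j - p'.eval (x j) / q'.eval (x j)‖)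
    (w : Fin m → ℝ) (hw0 : ∀ j, 0 ≤ w j) (hw1 : ∑ j, w j = 1)
    (hsd : d2 n₁ n₂ x f w = η ^ 2)
    (hattain : ∃ τ : ℂ,
      (∑ j, w j * ‖(Polynomial.C τ * q).eval (x j)‖ ^ 2) = 1 ∧
      (∑ j, w j * ‖f j * (Polynomial.C τ * q).eval (x j) -
        (Polynomial.C τ * p).eval (x j)‖ ^ 2) = d2 n₁ n₂ x f w) :
    ∀ j, w j * (η - ‖f j - p.eval (x j) / q.eval (x j)‖) = 0 := by

  obtain ⟨τ, h1, h2⟩ := hattain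
  rw [hsd] at h2
  -- simplify evaluations
  simp only [Polynomial.eval_mul, Polynomial.eval_C] at h1 h2
  have hτ : τ ≠ 0 := by
    rintro rfl
    simp at h1
  -- rewrite the second sum
  have key : ∀ j, f j * (τ * q.eval (x j)) - τ * p.eval (x j)
      = τ * q.eval (x j) * (f j - p.eval (x j) / q.eval (x j)) := by
    intro j
    field_simp [hq0 j]
  have h2' : ∑ j, (w j * ‖τ * q.eval (x j)‖ ^ 2) *
      ‖f j - p.eval (x j) / q.eval (x j)‖ ^ 2 = η ^ 2 := by
    rw [← h2]
    apply Finset.sum_congr rfl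
    intro j _
    have habs : ‖f j * (τ * q.eval (x j)) - τ * p.eval (x j)‖
        = ‖τ * q.eval (x j)‖ * ‖f j - p.eval (x j) / q.eval (x j)‖ := by
      rw [key j, norm_mul]
    rw [habs]; ring
  -- Σ aⱼ (η² - eⱼ²) = 0
  have hzero : ∑ j, (w j * ‖τ * q.eval (x j)‖ ^ 2) *
      (η ^ 2 - ‖f j - p.eval (x j) / q.eval (x j)‖ ^ 2) = 0 := by
    have : ∑ j, (w j * ‖τ * q.eval (x j)‖ ^ 2) *
        (η ^ 2 - ‖f j - p.eval (x j) / q.eval (x j)‖ ^ 2)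
        = (∑ j, w j * ‖τ * q.eval (x j)‖ ^ 2) * η ^ 2
          - ∑ j, (w j * ‖τ * q.eval (x j)‖ ^ 2) *
            ‖f j - p.eval (x j) / q.eval (x j)‖ ^ 2 := by
      rw [Finset.sum_mul, ← Finset.sum_sub_distrib]
      apply Finset.sum_congr rfl
      intro j _; ring
    rw [this, h1, h2', one_mul, sub_self]
  have hnonneg : ∀ j ∈ Finset.univ, 0 ≤ (w j * ‖τ * q.eval (x j)‖ ^ 2) *
      (η ^ 2 - ‖f j - p.eval (x j) / q.eval (x j)‖ ^ 2) := by
    intro j _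
    apply mul_nonneg (mul_nonneg (hw0 j) (by positivity))
    have := hub j
    nlinarith [norm_nonneg (f j - p.eval (x j) / q.eval (x j))]
  have heach := (Finset.sum_eq_zero_iff_of_nonneg hnonneg).mp hzero
  intro j
  have hj := heach j (Finset.mem_univ j)
  rcases mul_eq_zero.mp hj with h | h
  · rcases mul_eq_zero.mp h with h' | h'
    · rw [h', zero_mul]
    · exfalso
      have : ‖τ * q.eval (x j)‖ ≠ 0 := by
        simp [hτ, hq0 j]
      exact this (pow_eq_zero_iff (by norm_num) |>.mp h')
  · have hη : 0 ≤ η := le_trans (norm_nonneg _) (hub j)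
    have : η = ‖f j - p.eval (x j) / q.eval (x j)‖ := by
      nlinarith [norm_nonneg (f j - p.eval (x j) / q.eval (x j))]
    rw [← this, sub_self, mul_zero]
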